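/- For all n, m ≥ 1, the following are equivalent: (1) every finite system of non-commutative polynomial equations with integer coefficients (in any number of variables) that is solvable in M_n(ℤ) is also solvable in M_m(ℤ); (2) n divides m. -/

import Mathlib

lemma sum_stdBasis_one {α} [Fintype α] [DecidableEq α] :
    (∑ i : α, Matrix.single i i (1 : ℤ)) = 1 := by
  ext a b
  simp only [Matrix.sum_apply, Matrix.single, Matrix.of_apply, Matrix.one_apply,
    ← ite_and]
  rcases eq_or_ne a b with rfl | h
  · simp
  · have : Finset.filter (fun x => x = a ∧ x = b) Finset.univ = ∅ := by
      ext x; simp; rintro rfl; exact h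
    simp [this, h]

/-- For `n, m ≥ 1`: every finite system of non-commutative polynomial equations with
integer coefficients solvable in `M_n(ℤ)` is also solvable in `M_m(ℤ)` if and only if
`n ∣ m`. A system is a finite family `P : Fin s → FreeAlgebra ℤ (Fin k)`, solvable when
all `P j` evaluate to the zero matrix at some common tuple. -/
theorem stmt6 (n m : ℕ) (hn : 1 ≤ n) (hm : 1 ≤ m) :
    (∀ (k s : ℕ) (P : Fin s → FreeAlgebra ℤ (Fin k)),
      (∃ X : Fin k → Matrix (Fin n) (Fin n) ℤ,
        ∀ j : Fin s, FreeAlgebra.lift ℤ X (P j) = 0) →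
      (∃ Y : Fin k → Matrix (Fin m) (Fin m) ℤ,
        ∀ j : Fin s, FreeAlgebra.lift ℤ Y (P j) = 0))
    ↔ n ∣ m := by
  constructor
  · intro h
    haveI : NeZero n := ⟨by omega⟩
    classical
    set e : Fin n × Fin n ≃ Fin (n * n) := finProdFinEquiv with he
    set ee : Fin (n * n) × Fin (n * n) ≃ Fin (n * n * (n * n)) := finProdFinEquiv with hee
    -- the system of matrix-unit relations
    set P : Fin (n * n * (n * n) + 1) → FreeAlgebra ℤ (Fin (n * n)) := fun j =>
      Sum.elim
        (fun p : Fin (n * n * (n * n)) =>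
          FreeAlgebra.ι ℤ (ee.symm p).1 * FreeAlgebra.ι ℤ (ee.symm p).2 -
            (if (e.symm (ee.symm p).1).2 = (e.symm (ee.symm p).2).1 then
              FreeAlgebra.ι ℤ (e ((e.symm (ee.symm p).1).1, (e.symm (ee.symm p).2).2)) else 0))
        (fun _ : Fin 1 => (∑ i : Fin n, FreeAlgebra.ι ℤ (e (i, i))) - 1)
        (finSumFinEquiv.symm j) with hP
    obtain ⟨Y, hY⟩ := h (n * n) (n * n * (n * n) + 1) P ⟨
      fun a => Matrix.single (e.symm a).1 (e.symm a).2 (1 : ℤ), by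
        intro j
        rcases hj : finSumFinEquiv.symm j with p | u
        · simp only [hP, hj, Sum.elim_inl, map_sub, map_mul, FreeAlgebra.lift_ι_apply]
          rw [apply_ite (FreeAlgebra.lift ℤ _)]
          split_ifs with hcond
          · rw [FreeAlgebra.lift_ι_apply, Equiv.symm_apply_apply, hcond,
              Matrix.single_mul_single_same, one_mul, sub_self]
          · rw [map_zero, sub_zero]
            exact Matrix.single_mul_single_of_ne (h := hcond) ..
        · simp only [hP, hj, Sum.elim_inr, map_sub, map_one, map_sum,
            FreeAlgebra.lift_ι_apply]
          simp only [Equiv.symm_apply_apply]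
          rw [sum_stdBasis_one, sub_self]⟩
    -- the matrix units in M_m
    set F : Fin n → Fin n → Matrix (Fin m) (Fin m) ℤ := fun i j => Y (e (i, j)) with hF
    have hmul : ∀ i j k l : Fin n,
        F i j * F k l = if j = k then F i l else 0 := by
      intro i j k l
      have := hY (finSumFinEquiv (Sum.inl (ee (e (i, j), e (k, l)))))
      simp only [hP, Equiv.symm_apply_apply, Sum.elim_inl, map_sub, map_mul,
        FreeAlgebra.lift_ι_apply] at this
      rw [apply_ite (FreeAlgebra.lift ℤ Y), FreeAlgebra.lift_ι_apply, map_zero,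
        sub_eq_zero] at this
      exact this
    have hone : (∑ i : Fin n, F i i) = 1 := by
      have := hY (finSumFinEquiv (Sum.inr 0))
      simp only [hP, Equiv.symm_apply_apply, Sum.elim_inr, map_sub, map_one, map_sum,
        FreeAlgebra.lift_ι_apply, sub_eq_zero] at this
      exact this
    -- trace argument
    have htr : ∀ i : Fin n, (F i i).trace = (F 0 0).trace := by
      intro i
      have h1 : F i 0 * F 0 i = F i i := by rw [hmul]; simp
      have h2 : F 0 i * F i 0 = F 0 0 := by rw [hmul]; simp
      rw [← h1, Matrix.trace_mul_comm, h2]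
    have : (m : ℤ) = n * (F 0 0).trace := by
      have := congrArg Matrix.trace hone
      rw [Matrix.trace_one, Matrix.trace_sum] at this
      simp only [htr] at this
      rw [Finset.sum_const, Finset.card_univ, Fintype.card_fin, nsmul_eq_mul] at this
      simpa using this.symm
    have : (n : ℤ) ∣ (m : ℤ) := ⟨(F 0 0).trace, this⟩
    exact_mod_cast this
  · rintro ⟨q, rfl⟩ k s P ⟨X, hX⟩
    classical
    -- block-diagonal ring hom M_n(ℤ) →+* M_{nq}(ℤ)
    let φ : Matrix (Fin n) (Fin n) ℤ →+* Matrix (Fin (n * q)) (Fin (n * q)) ℤ :=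
      ((Matrix.reindexAlgEquiv ℤ ℤ (finProdFinEquiv (m := n) (n := q))).toRingEquiv.toRingHom).comp
        ((Matrix.blockDiagonalRingHom (Fin n) (Fin q) ℤ).comp
          (Pi.constRingHom (Fin q) (Matrix (Fin n) (Fin n) ℤ)))
    refine ⟨fun i => φ (X i), fun j => ?_⟩
    have key : (φ.toIntAlgHom.comp (FreeAlgebra.lift ℤ X) :
        FreeAlgebra ℤ (Fin k) →ₐ[ℤ] Matrix (Fin (n * q)) (Fin (n * q)) ℤ) =
        FreeAlgebra.lift ℤ (fun i => φ (X i)) := by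
      apply FreeAlgebra.hom_ext
      funext i
      simp
      exact (FreeAlgebra.lift_ι_apply (R := ℤ) (A := Matrix (Fin (n * q)) (Fin (n * q)) ℤ)
        (fun i => φ (X i)) i).symm
    calc FreeAlgebra.lift ℤ (fun i => φ (X i)) (P j)
        = φ.toIntAlgHom (FreeAlgebra.lift ℤ X (P j)) := by rw [← key]; rfl
      _ = 0 := by rw [hX j]; exact map_zero _
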